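/- Let U, V, M be given real matrices with U^T U = I and V^T V = I. Then for every matrix Z satisfying U^T Z V = M, one has ‖Z‖_* ≥ ‖M‖_*. In particular, the minimum of ‖Z‖_* over the constraint set {Z : U^T Z V = M} equals ‖M‖_*. -/

import Mathlib

open Matrix

theorem Matrix.isHermitian_transpose_mul_self {m n : Type*} [Fintype m] (A : Matrix m n ℝ) :
    (Aᵀ * A).IsHermitian := by
  simpa [Matrix.conjTranspose_eq_transpose_of_trivial] using
    Matrix.isHermitian_conjTranspose_mul_self A

/-- The nuclear norm of a real matrix: the sum of its singular values,
i.e. the sum of the square roots of the eigenvalues of `Mᵀ * M`. -/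
noncomputable def nuclearNorm {m n : Type*} [Fintype m] [Fintype n] [DecidableEq n]
    (M : Matrix m n ℝ) : ℝ :=
  ∑ i, Real.sqrt ((Matrix.isHermitian_transpose_mul_self M).eigenvalues i)

namespace NucAux

variable {k l m n : Type*}

/-- `W` is a (Euclidean) contraction. -/
def Contr [Fintype k] [Fintype l] (W : Matrix k l ℝ) : Prop :=
  ∀ x : l → ℝ, (W *ᵥ x) ⬝ᵥ (W *ᵥ x) ≤ x ⬝ᵥ x

lemma dot_self_nonneg [Fintype k] (x : k → ℝ) : 0 ≤ x ⬝ᵥ x :=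
  Finset.sum_nonneg fun i _ => mul_self_nonneg _

lemma dot_mul_self [Fintype k] [Fintype l] (A : Matrix k l ℝ) (x : l → ℝ) :
    (A *ᵥ x) ⬝ᵥ (A *ᵥ x) = x ⬝ᵥ ((Aᵀ * A) *ᵥ x) := by
  rw [← mulVec_mulVec, dotProduct_mulVec x Aᵀ, vecMul_transpose]

lemma contr_mul [Fintype k] [Fintype l] [Fintype m]
    {A : Matrix k l ℝ} {B : Matrix l m ℝ} (hA : Contr A) (hB : Contr B) :
    Contr (A * B) := by
  intro x
  rw [← mulVec_mulVec]
  exact le_trans (hA _) (hB x)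

lemma contr_of_iso [Fintype k] [Fintype l] [DecidableEq l]
    {A : Matrix k l ℝ} (h : Aᵀ * A = 1) : Contr A := by
  intro x
  rw [dot_mul_self, h, one_mulVec]

lemma contr_transpose_of_iso [Fintype k] [Fintype l] [DecidableEq l]
    {A : Matrix k l ℝ} (h : Aᵀ * A = 1) : Contr Aᵀ := by
  intro x
  rw [dot_mul_self, transpose_transpose]
  set P : Matrix k k ℝ := A * Aᵀ with hP
  have hPP : P * P = P := by
    rw [hP, Matrix.mul_assoc, ← Matrix.mul_assoc Aᵀ A, h, Matrix.one_mul]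
  have h0 : 0 ≤ (x - P *ᵥ x) ⬝ᵥ (x - P *ᵥ x) := dot_self_nonneg _
  have hsym : (P *ᵥ x) ⬝ᵥ x = x ⬝ᵥ (P *ᵥ x) := dotProduct_comm _ _
  have hPx : (P *ᵥ x) ⬝ᵥ (P *ᵥ x) = x ⬝ᵥ (P *ᵥ x) := by
    have : Pᵀ = P := by rw [hP, transpose_mul, transpose_transpose]
    rw [dot_mul_self, this, hPP]
  rw [sub_dotProduct, dotProduct_sub, dotProduct_sub, hPx] at h0
  linarith

section SVD

variable [Fintype m] [Fintype n] [DecidableEq n]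

/-- eigenvector matrix of `Mᵀ * M` -/
noncomputable def Q (M : Matrix m n ℝ) : Matrix n n ℝ :=
  (isHermitian_transpose_mul_self M).eigenvectorUnitary

/-- eigenvalues of `Mᵀ * M` -/
noncomputable def lam (M : Matrix m n ℝ) : n → ℝ :=
  (isHermitian_transpose_mul_self M).eigenvalues

/-- singular values of `M` -/
noncomputable def sig (M : Matrix m n ℝ) : n → ℝ :=
  fun i => Real.sqrt (lam M i)

lemma nuclear_eq_sum_sig (M : Matrix m n ℝ) : nuclearNorm M = ∑ i, sig M i := rfl

lemma star_Q (M : Matrix m n ℝ) :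
    (star ((isHermitian_transpose_mul_self M).eigenvectorUnitary :
      Matrix n n ℝ)) = (Q M)ᵀ := by
  rw [Matrix.star_eq_conjTranspose, conjTranspose_eq_transpose_of_trivial]; rfl

lemma hQ1 (M : Matrix m n ℝ) : (Q M)ᵀ * Q M = 1 := by
  rw [← star_Q]
  exact ((isHermitian_transpose_mul_self M).eigenvectorUnitary).2.1

lemma hQ2 (M : Matrix m n ℝ) : Q M * (Q M)ᵀ = 1 := by
  rw [← star_Q]
  exact ((isHermitian_transpose_mul_self M).eigenvectorUnitary).2.2

lemma trace_conj {A : Matrix n n ℝ} {Qm : Matrix n n ℝ} (h : Qmᵀ * Qm = 1) :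
    trace (Qm * A * Qmᵀ) = trace A := by
  rw [trace_mul_comm, ← Matrix.mul_assoc, h, Matrix.one_mul]

lemma spec (M : Matrix m n ℝ) : Mᵀ * M = Q M * diagonal (lam M) * (Q M)ᵀ := by
  have h := (isHermitian_transpose_mul_self M).spectral_theorem
  rw [Unitary.conjStarAlgAut_apply] at h
  rw [star_Q] at h
  exact h

lemma specQ (M : Matrix m n ℝ) : (Q M)ᵀ * (Mᵀ * M) = diagonal (lam M) * (Q M)ᵀ := by
  rw [spec M, ← Matrix.mul_assoc, ← Matrix.mul_assoc, hQ1, Matrix.one_mul]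

lemma CtC (M : Matrix m n ℝ) : (M * Q M)ᵀ * (M * Q M) = diagonal (lam M) := by
  calc (M * Q M)ᵀ * (M * Q M) = (Q M)ᵀ * (Mᵀ * M) * Q M := by
        simp only [transpose_mul, Matrix.mul_assoc]
    _ = diagonal (lam M) * (Q M)ᵀ * Q M := by rw [specQ]
    _ = diagonal (lam M) := by rw [Matrix.mul_assoc, hQ1, Matrix.mul_one]

lemma col_sq_sum (M : Matrix m n ℝ) (i : n) :
    (∑ r, (M * Q M) r i ^ 2) = lam M i := by
  have h := congrFun (congrFun (CtC M) i) i
  rw [mul_apply, diagonal_apply_eq] at h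
  rw [← h]
  exact Finset.sum_congr rfl fun r _ => by rw [pow_two, transpose_apply]

lemma lam_nonneg (M : Matrix m n ℝ) (i : n) : 0 ≤ lam M i := by
  rw [← col_sq_sum M i]
  exact Finset.sum_nonneg fun r _ => sq_nonneg _

lemma sig_nonneg (M : Matrix m n ℝ) (i : n) : 0 ≤ sig M i := Real.sqrt_nonneg _

lemma sig_sq (M : Matrix m n ℝ) (i : n) : sig M i ^ 2 = lam M i :=
  Real.sq_sqrt (lam_nonneg M i)

/-- quadratic form bound for `Q * diagonal e * Qᵀ` with `e ≤ 1`. -/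
lemma quad_le (M : Matrix m n ℝ) (e : n → ℝ) (he : ∀ i, e i ≤ 1) (x : n → ℝ) :
    x ⬝ᵥ ((Q M * diagonal e * (Q M)ᵀ) *ᵥ x) ≤ x ⬝ᵥ x := by
  have h1 : x ⬝ᵥ ((Q M * diagonal e * (Q M)ᵀ) *ᵥ x)
      = ((Q M)ᵀ *ᵥ x) ⬝ᵥ (diagonal e *ᵥ ((Q M)ᵀ *ᵥ x)) := by
    rw [← mulVec_mulVec, ← mulVec_mulVec, dotProduct_mulVec x (Q M), ← mulVec_transpose]
  have h2 : ((Q M)ᵀ *ᵥ x) ⬝ᵥ ((Q M)ᵀ *ᵥ x) = x ⬝ᵥ x := by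
    rw [dot_mul_self, transpose_transpose, hQ2, one_mulVec]
  rw [h1, ← h2]
  apply Finset.sum_le_sum
  intro i _
  rw [mulVec_diagonal]
  set y := ((Q M)ᵀ *ᵥ x) i
  calc y * (e i * y) = e i * (y * y) := by ring
    _ ≤ 1 * (y * y) := mul_le_mul_of_nonneg_right (he i) (mul_self_nonneg _)
    _ = y * y := one_mul _

/-- attainment: a contraction `W` with `trace (Wᵀ * M) = nuclearNorm M`. -/
lemma attain (M : Matrix m n ℝ) :
    ∃ W : Matrix m n ℝ, Contr W ∧ trace (Wᵀ * M) = nuclearNorm M := by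
  classical
  set inv : n → ℝ := fun i => if sig M i = 0 then 0 else (sig M i)⁻¹ with hinv
  refine ⟨M * Q M * diagonal inv * (Q M)ᵀ, ?_, ?_⟩
  · -- contraction
    intro x
    rw [dot_mul_self]
    have hW : (M * Q M * diagonal inv * (Q M)ᵀ)ᵀ * (M * Q M * diagonal inv * (Q M)ᵀ)
        = Q M * diagonal (fun i => inv i * (lam M i * inv i)) * (Q M)ᵀ := by
      have hdt : (diagonal inv)ᵀ = diagonal inv := diagonal_transpose inv
      calc (M * Q M * diagonal inv * (Q M)ᵀ)ᵀ * (M * Q M * diagonal inv * (Q M)ᵀ)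
          = Q M * (diagonal inv * (((M * Q M)ᵀ * (M * Q M)) * (diagonal inv * (Q M)ᵀ))) := by
            simp only [transpose_mul, transpose_transpose, hdt, Matrix.mul_assoc]
        _ = Q M * diagonal (fun i => inv i * (lam M i * inv i)) * (Q M)ᵀ := by
            rw [CtC M]
            simp only [diagonal_mul_diagonal, ← Matrix.mul_assoc]
    rw [hW]
    apply quad_le
    intro i
    by_cases h : sig M i = 0
    · simp [hinv, h]
    · have : inv i * (lam M i * inv i) = 1 := by
        simp only [hinv, if_neg h]
        rw [← sig_sq M i, sq]
        field_simp
      rw [this]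
  · -- trace value
    have hWM : (M * Q M * diagonal inv * (Q M)ᵀ)ᵀ * M
        = Q M * (diagonal inv * diagonal (lam M)) * (Q M)ᵀ := by
      calc (M * Q M * diagonal inv * (Q M)ᵀ)ᵀ * M
          = Q M * (diagonal inv * ((Q M)ᵀ * (Mᵀ * M))) := by
            simp only [transpose_mul, transpose_transpose, diagonal_transpose,
              Matrix.mul_assoc]
        _ = Q M * (diagonal inv * (diagonal (lam M) * (Q M)ᵀ)) := by rw [specQ]
        _ = Q M * (diagonal inv * diagonal (lam M)) * (Q M)ᵀ := by
            simp only [Matrix.mul_assoc]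
    rw [hWM, trace_conj (hQ1 M), diagonal_mul_diagonal, trace_diagonal, nuclear_eq_sum_sig]
    apply Finset.sum_congr rfl
    intro i _
    by_cases h : sig M i = 0
    · have h0 : lam M i = 0 := by rw [← sig_sq M i, h]; ring
      simp [hinv, h, h0]
    · have hl : lam M i = sig M i ^ 2 := (sig_sq M i).symm
      simp only [hinv, if_neg h, hl, sq]
      field_simp

/-- Cauchy–Schwarz corollary. -/
lemma sum_mul_le (f g : m → ℝ) :
    (∑ r, f r * g r) ≤ Real.sqrt (∑ r, f r ^ 2) * Real.sqrt (∑ r, g r ^ 2) := by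
  have h := Finset.sum_mul_sq_le_sq_mul_sq Finset.univ f g
  calc (∑ r, f r * g r) ≤ |∑ r, f r * g r| := le_abs_self _
    _ = Real.sqrt ((∑ r, f r * g r) ^ 2) := (Real.sqrt_sq_eq_abs _).symm
    _ ≤ Real.sqrt ((∑ r, f r ^ 2) * (∑ r, g r ^ 2)) := Real.sqrt_le_sqrt h
    _ = _ := Real.sqrt_mul (Finset.sum_nonneg fun r _ => sq_nonneg _) _

/-- dual bound: for any contraction `W`, `trace (Wᵀ * Z) ≤ nuclearNorm Z`. -/
lemma dual_bound [Fintype k] (W Z : Matrix m k ℝ) [DecidableEq k] (hW : Contr W) :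
    trace (Wᵀ * Z) ≤ nuclearNorm Z := by
  classical
  have htr : trace (Wᵀ * Z) = ∑ i, ∑ r, (W * Q Z) r i * (Z * Q Z) r i := by
    have e1 : (W * Q Z)ᵀ * (Z * Q Z) = (Q Z)ᵀ * (Wᵀ * Z) * Q Z := by
      simp only [transpose_mul, Matrix.mul_assoc]
    have e2 : trace ((W * Q Z)ᵀ * (Z * Q Z)) = trace (Wᵀ * Z) := by
      rw [e1, trace_mul_comm, ← Matrix.mul_assoc, hQ2, Matrix.one_mul]
    rw [← e2, trace]
    apply Finset.sum_congr rfl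
    intro i _
    rw [diag, mul_apply]
    exact Finset.sum_congr rfl fun r _ => by rw [transpose_apply]
  rw [htr, nuclear_eq_sum_sig]
  apply Finset.sum_le_sum
  intro i _
  have hcol : (∑ r, (Z * Q Z) r i ^ 2) = lam Z i := col_sq_sum Z i
  have hWcol : (∑ r, (W * Q Z) r i ^ 2) ≤ 1 := by
    have hx := hW (fun j => Q Z j i)
    have h1 : (W *ᵥ fun j => Q Z j i) = fun r => (W * Q Z) r i := by
      ext r; simp [mulVec, dotProduct, mul_apply]
    have h2 : ((fun j => Q Z j i) ⬝ᵥ fun j => Q Z j i) = 1 := by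
      have h := congrFun (congrFun (hQ1 Z) i) i
      rw [mul_apply, one_apply_eq] at h
      simpa [dotProduct, transpose_apply] using h
    rw [h1, h2] at hx
    calc (∑ r, (W * Q Z) r i ^ 2)
        = (fun r => (W * Q Z) r i) ⬝ᵥ (fun r => (W * Q Z) r i) := by
          simp [dotProduct, sq]
      _ ≤ 1 := hx
  calc (∑ r, (W * Q Z) r i * (Z * Q Z) r i)
      ≤ Real.sqrt (∑ r, (W * Q Z) r i ^ 2) * Real.sqrt (∑ r, (Z * Q Z) r i ^ 2) :=
        sum_mul_le _ _
    _ ≤ 1 * sig Z i := by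
        apply mul_le_mul
        · calc Real.sqrt (∑ r, (W * Q Z) r i ^ 2) ≤ Real.sqrt 1 := Real.sqrt_le_sqrt hWcol
            _ = 1 := Real.sqrt_one
        · rw [hcol]; rfl
        · exact Real.sqrt_nonneg _
        · norm_num
    _ = sig Z i := one_mul _

end SVD

end NucAux

open NucAux

theorem stmt_3 {k l m n : Type*} [Fintype k] [Fintype l] [Fintype m] [Fintype n]
    [DecidableEq l] [DecidableEq m] [DecidableEq n]
    (U : Matrix k m ℝ) (V : Matrix l n ℝ) (M : Matrix m n ℝ)
    (hU : Uᵀ * U = 1) (hV : Vᵀ * V = 1) :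
    (∀ Z : Matrix k l ℝ, Uᵀ * Z * V = M → nuclearNorm M ≤ nuclearNorm Z) ∧
    (∃ Z : Matrix k l ℝ, Uᵀ * Z * V = M ∧ nuclearNorm Z = nuclearNorm M) := by
  have part1 : ∀ Z : Matrix k l ℝ, Uᵀ * Z * V = M → nuclearNorm M ≤ nuclearNorm Z := by
    intro Z hZ
    obtain ⟨W, hWc, hWt⟩ := attain M
    have hcontr : Contr (U * W * Vᵀ) :=
      contr_mul (contr_mul (contr_of_iso hU) hWc) (contr_transpose_of_iso hV)
    have htr : trace ((U * W * Vᵀ)ᵀ * Z) = trace (Wᵀ * M) := by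
      rw [← hZ]
      rw [transpose_mul, transpose_mul, transpose_transpose]
      calc trace (Vᵀᵀ * (Wᵀ * Uᵀ) * Z) = trace (V * (Wᵀ * (Uᵀ * Z))) := by
            rw [transpose_transpose]; rw [Matrix.mul_assoc, Matrix.mul_assoc]
        _ = trace ((Wᵀ * (Uᵀ * Z)) * V) := trace_mul_comm _ _
        _ = trace (Wᵀ * (Uᵀ * Z * V)) := by rw [Matrix.mul_assoc, Matrix.mul_assoc]
    calc nuclearNorm M = trace ((U * W * Vᵀ)ᵀ * Z) := by rw [htr, hWt]
      _ ≤ nuclearNorm Z := dual_bound _ _ hcontr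
  have hfeas : Uᵀ * (U * M * Vᵀ) * V = M := by
    have h1 : Uᵀ * (U * M * Vᵀ) * V = (Uᵀ * U) * M * (Vᵀ * V) := by
      simp only [Matrix.mul_assoc]
    rw [h1, hU, hV, Matrix.one_mul, Matrix.mul_one]
  refine ⟨part1, ⟨U * M * Vᵀ, hfeas, ?_⟩⟩
  · have hge : nuclearNorm M ≤ nuclearNorm (U * M * Vᵀ) := part1 _ hfeas
    have hle : nuclearNorm (U * M * Vᵀ) ≤ nuclearNorm M := by
      obtain ⟨W', hW'c, hW't⟩ := attain (U * M * Vᵀ)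
      have hcontr : Contr (Uᵀ * W' * V) :=
        contr_mul (contr_mul (contr_transpose_of_iso hU) hW'c) (contr_of_iso hV)
      have htr : trace ((Uᵀ * W' * V)ᵀ * M) = trace (W'ᵀ * (U * M * Vᵀ)) := by
        have e1 : (Uᵀ * W' * V)ᵀ * M = Vᵀ * (W'ᵀ * U * M) := by
          simp only [transpose_mul, transpose_transpose, Matrix.mul_assoc]
        rw [e1, trace_mul_comm]
        congr 1
        simp only [Matrix.mul_assoc]
      calc nuclearNorm (U * M * Vᵀ) = trace ((Uᵀ * W' * V)ᵀ * M) := by rw [htr, hW't]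
        _ ≤ nuclearNorm M := dual_bound _ _ hcontr
    linarith
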